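/- Let n ≥ 4 be an even integer and let 0 < α ≤ 1. Let f be a normalized analytic function on 𝔻 with f(z) ≠ 0 for all z ∈ 𝔻 \ {0}, and suppose the function p defined by p(z) = z f'(z)/f(z) for z ≠ 0 and p(0) = 1 is subordinate to ψ(z) = 1 + z/(1 − αz²). Then for every z with 0 < |z| < ( √((n+1)² + 4α(n−1)²) − (n+1) ) / (2α(n−1)), one has z f'(z)/f(z) ∈ Ω_{nL}. (This is the S*_{nL}-radius of the class BS(α).) -/

import Mathlib

open Complex Metric Set

/-- The function φ_{nL}(z) = 1 + n z/(n+1) + z^n/(n+1). -/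
noncomputable def phinL (n : ℕ) (z : ℂ) : ℂ :=
  1 + (n : ℂ) * z / ((n : ℂ) + 1) + z ^ n / ((n : ℂ) + 1)

/-- Ω_{nL} = φ_{nL}(𝔻), the image of the open unit disk. -/
def OmeganL (n : ℕ) : Set ℂ := phinL n '' ball (0 : ℂ) 1

/-- f is analytic on the unit disk with f(0) = 0 and f'(0) = 1. -/
def IsNormalizedAnalytic (f : ℂ → ℂ) : Prop :=
  AnalyticOnNhd ℂ f (ball (0 : ℂ) 1) ∧ f 0 = 0 ∧ deriv f 0 = 1

/-- p is subordinate to ψ on the unit disk. -/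
def Subord (p ψ : ℂ → ℂ) : Prop :=
  ∃ ω : ℂ → ℂ, AnalyticOnNhd ℂ ω (ball (0 : ℂ) 1) ∧ ω 0 = 0 ∧
    (∀ z ∈ ball (0 : ℂ) 1, ω z ∈ ball (0 : ℂ) 1) ∧
    (∀ z ∈ ball (0 : ℂ) 1, p z = ψ (ω z))

/-- Membership in the class S*_{nL}. -/
def MemSnL (n : ℕ) (f : ℂ → ℂ) : Prop :=
  IsNormalizedAnalytic f ∧ (∀ z ∈ ball (0 : ℂ) 1, z ≠ 0 → f z ≠ 0) ∧
  Subord (fun z => if z = 0 then 1 else z * deriv f z / f z) (phinL n)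

lemma disk_subset_OmeganL {n : ℕ} (hn : 4 ≤ n) {u : ℂ}
    (hu : ‖u - 1‖ < ((n : ℝ) - 1) / ((n : ℝ) + 1)) : u ∈ OmeganL n := by
  have hn4 : (4 : ℝ) ≤ (n : ℝ) := by exact_mod_cast hn
  have hn0 : (0 : ℝ) < (n : ℝ) := by linarith
  have hnne : n ≠ 0 := by omega
  have hnc : (n : ℂ) ≠ 0 := Nat.cast_ne_zero.2 hnne
  have hn1c : ((n : ℂ) + 1) ≠ 0 := by
    intro h
    have : ((n : ℝ) + 1) = 0 := by exact_mod_cast congrArg Complex.re h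
    linarith
  set v : ℂ := (u - 1) * ((n : ℂ) + 1) / (n : ℂ) with hv_def
  have habs_n : ‖(n : ℂ)‖ = (n : ℝ) := by
    simpa using Complex.norm_natCast n
  have habs_n1 : ‖(n : ℂ) + 1‖ = (n : ℝ) + 1 := by
    rw [show ((n : ℂ) + 1) = ((n + 1 : ℕ) : ℂ) by push_cast; ring]
    simpa using Complex.norm_natCast (n + 1)
  have hv : ‖v‖ < ((n : ℝ) - 1) / (n : ℝ) := by
    rw [hv_def, norm_div, norm_mul, habs_n, habs_n1]
    rw [div_lt_div_iff₀ hn0 hn0]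
    have := mul_lt_mul_of_pos_right (mul_lt_mul_of_pos_right hu
      (by linarith : (0:ℝ) < (n:ℝ)+1)) hn0
    calc ‖u - 1‖ * ((n : ℝ) + 1) * (n:ℝ)
        < (((n:ℝ) - 1) / ((n:ℝ)+1)) * ((n:ℝ)+1) * (n:ℝ) := this
      _ = ((n:ℝ) - 1) * (n:ℝ) := by field_simp
  obtain ⟨r, hr0, hr1, hrv⟩ : ∃ r : ℝ, 0 < r ∧ r < 1 ∧ ‖v‖ ≤ r - r ^ n / n := by
    set ε : ℝ := ((n : ℝ) - 1) / (n : ℝ) - ‖v‖ with hε_def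
    have hε0 : 0 < ε := by simp only [hε_def]; linarith
    have hm1 := min_le_left ε (1/2)
    have hm2 := min_le_right ε (1/2)
    have hm0 := lt_min hε0 (by norm_num : (0:ℝ) < 1/2)
    refine ⟨1 - min ε (1/2), by linarith, by linarith, ?_⟩
    have h0 : 0 ≤ 1 - min ε (1/2) := by linarith
    have h1 : (1 - min ε (1/2)) ^ n ≤ 1 := pow_le_one₀ h0 (by linarith)
    have h2 : (1 - min ε (1/2)) ^ n / (n:ℝ) ≤ 1 / (n:ℝ) := by gcongr
    have h3 : ‖v‖ = ((n:ℝ)-1)/(n:ℝ) - ε := by simp [hε_def]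
    have hinv : ((n:ℝ) - 1)/(n:ℝ) = 1 - 1/(n:ℝ) := by field_simp
    rw [h3, hinv]
    linarith
  have hrn : r ^ n ≤ 1 := pow_le_one₀ hr0.le hr1.le
  -- the contraction T x = v - x^n/n on closedBall 0 r
  have hmaps : ∀ x : ℂ, x ∈ closedBall (0:ℂ) r → v - x ^ n / n ∈ closedBall (0:ℂ) r := by
    intro x hx
    rw [mem_closedBall_zero_iff] at hx ⊢
    have hxn : ‖x ^ n / n‖ ≤ r ^ n / n := by
      rw [norm_div, norm_pow, habs_n]
      gcongr
    calc ‖v - x ^ n / (n:ℂ)‖ ≤ ‖v‖ + ‖x ^ n / (n:ℂ)‖ := norm_sub_le _ _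
      _ ≤ (r - r ^ n / n) + r ^ n / n := add_le_add hrv hxn
      _ = r := by ring
  haveI : CompleteSpace (closedBall (0:ℂ) r) :=
    (Metric.isClosed_closedBall (x := (0:ℂ)) (ε := r)).completeSpace_coe
  set T : closedBall (0:ℂ) r → closedBall (0:ℂ) r :=
    fun x => ⟨v - (x : ℂ) ^ n / n, hmaps x x.2⟩ with hT_def
  have hK0 : (0:ℝ) ≤ r ^ (n - 1) := by positivity
  set K : NNReal := ⟨r ^ (n - 1), hK0⟩ with hK_def
  have hKlt : K < 1 := by
    rw [← NNReal.coe_lt_coe]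
    exact pow_lt_one₀ hr0.le hr1 (by omega)
  have hkey : ∀ x y : ℂ, x ∈ closedBall (0:ℂ) r → y ∈ closedBall (0:ℂ) r →
      ‖x ^ n - y ^ n‖ ≤ n * r ^ (n - 1) * ‖x - y‖ := by
    intro x y hx hy
    rw [mem_closedBall_zero_iff] at hx hy
    rw [← geom_sum₂_mul x y n, norm_mul]
    have hsum : ‖∑ i ∈ Finset.range n, x ^ i * y ^ (n - 1 - i)‖ ≤ n * r ^ (n - 1) := by
      calc ‖∑ i ∈ Finset.range n, x ^ i * y ^ (n - 1 - i)‖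
          ≤ ∑ i ∈ Finset.range n, ‖x ^ i * y ^ (n - 1 - i)‖ := by
            exact norm_sum_le _ _
        _ ≤ ∑ i ∈ Finset.range n, r ^ (n - 1) := by
            apply Finset.sum_le_sum
            intro i hi
            rw [Finset.mem_range] at hi
            rw [norm_mul, norm_pow, norm_pow]
            calc ‖x‖ ^ i * ‖y‖ ^ (n - 1 - i)
                ≤ r ^ i * r ^ (n - 1 - i) := by
                  apply mul_le_mul (pow_le_pow_left₀ (norm_nonneg x) hx i)
                    (pow_le_pow_left₀ (norm_nonneg y) hy _) (by positivity) (by positivity)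
              _ = r ^ (n - 1) := by
                  rw [← pow_add]
                  congr 1
                  omega
        _ = n * r ^ (n - 1) := by simp [Finset.sum_const, mul_comm]
    exact mul_le_mul_of_nonneg_right hsum (norm_nonneg _)
  have hcontr : ContractingWith K T := by
    refine ⟨hKlt, LipschitzWith.of_dist_le_mul fun x y => ?_⟩
    have hd : dist (T x) (T y) = ‖(y:ℂ) ^ n - (x:ℂ) ^ n‖ / n := by
      rw [Subtype.dist_eq, hT_def]
      simp only [Complex.dist_eq]
      rw [show (v - (x:ℂ)^n/n) - (v - (y:ℂ)^n/n) = ((y:ℂ)^n - (x:ℂ)^n)/(n:ℂ) by ring,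
        norm_div, habs_n]
    rw [hd, Subtype.dist_eq, Complex.dist_eq]
    have := hkey (y:ℂ) (x:ℂ) y.2 x.2
    have hK : (K : ℝ) = r ^ (n - 1) := rfl
    rw [hK]
    rw [div_le_iff₀ hn0]
    calc ‖(y:ℂ) ^ n - (x:ℂ) ^ n‖
        ≤ n * r ^ (n-1) * ‖(y:ℂ) - (x:ℂ)‖ := this
      _ = r ^ (n-1) * ‖(x:ℂ) - (y:ℂ)‖ * n := by
          rw [← norm_neg ((y:ℂ) - (x:ℂ))]; ring_nf
  obtain ⟨x, hxfix, -⟩ := hcontr.exists_fixedPoint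
    ⟨0, by simp [mem_closedBall_zero_iff, hr0.le]⟩ (edist_ne_top _ _)
  have hx_eq : v - (x : ℂ) ^ n / n = (x : ℂ) := congrArg Subtype.val hxfix
  refine ⟨(x : ℂ), ?_, ?_⟩
  · rw [mem_ball_zero_iff]
    have := mem_closedBall_zero_iff.1 x.2
    exact lt_of_le_of_lt this hr1
  · have e : (u - 1) * ((n:ℂ)+1) / (n:ℂ) - (x:ℂ)^n/(n:ℂ) = (x:ℂ) := by
      rw [← hv_def]; exact hx_eq
    field_simp at e
    unfold phinL
    field_simp
    linear_combination -e

theorem stmt12 (n : ℕ) (hn : 4 ≤ n) (hne : Even n) (α : ℝ) (hα0 : 0 < α) (hα1 : α ≤ 1)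
    (f : ℂ → ℂ) (hf : IsNormalizedAnalytic f)
    (hfz : ∀ z ∈ ball (0 : ℂ) 1, z ≠ 0 → f z ≠ 0)
    (hsub : Subord (fun z => if z = 0 then 1 else z * deriv f z / f z)
      (fun z => 1 + z / (1 - (α : ℂ) * z ^ 2))) :
    ∀ z : ℂ, 0 < ‖z‖ →
      ‖z‖ <
        (Real.sqrt (((n : ℝ) + 1) ^ 2 + 4 * α * ((n : ℝ) - 1) ^ 2) - ((n : ℝ) + 1)) /
          (2 * α * ((n : ℝ) - 1)) →
      z * deriv f z / f z ∈ OmeganL n := by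
  obtain ⟨ω, hωa, hω0, hωmap, hωeq⟩ := hsub
  intro z hz0 hzρ
  have hn4 : (4 : ℝ) ≤ (n : ℝ) := by exact_mod_cast hn
  have hznz : z ≠ 0 := norm_pos_iff.mp hz0
  set t : ℝ := ‖z‖ with ht_def
  set D : ℝ := ((n : ℝ) + 1) ^ 2 + 4 * α * ((n : ℝ) - 1) ^ 2 with hD_def
  have hD0 : 0 ≤ D := by positivity
  set s : ℝ := Real.sqrt D with hs_def
  have hs2 : s ^ 2 = D := Real.sq_sqrt hD0
  have hs0 : 0 ≤ s := Real.sqrt_nonneg _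
  have ha : (0 : ℝ) < 2 * α * ((n : ℝ) - 1) :=
    mul_pos (by linarith) (by linarith)
  -- the quadratic inequality for any 0 ≤ w < ρ
  have hq : ∀ w : ℝ, 0 ≤ w → w < (s - ((n : ℝ) + 1)) / (2 * α * ((n : ℝ) - 1)) →
      α * ((n : ℝ) - 1) * w ^ 2 + ((n : ℝ) + 1) * w - ((n : ℝ) - 1) < 0 := by
    intro w hw0 hw
    rw [lt_div_iff₀ ha] at hw
    have h1 : 2 * α * ((n : ℝ) - 1) * w + ((n : ℝ) + 1) < s := by linarith
    have h2 : (2 * α * ((n : ℝ) - 1) * w + ((n : ℝ) + 1)) ^ 2 < s ^ 2 := by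
      have hnn : 0 ≤ 2 * α * ((n : ℝ) - 1) * w + ((n : ℝ) + 1) := by
        have := mul_nonneg ha.le hw0
        linarith
      exact pow_lt_pow_left₀ h1 hnn (by norm_num)
    rw [hs2, hD_def] at h2
    have key : 4 * α * ((n : ℝ) - 1) *
        (α * ((n : ℝ) - 1) * w ^ 2 + ((n : ℝ) + 1) * w - ((n : ℝ) - 1)) < 0 := by
      nlinarith [h2]
    by_contra hcon
    push_neg at hcon
    have := mul_nonneg (by linarith : (0:ℝ) ≤ 4 * α * ((n : ℝ) - 1)) hcon
    linarith
  have hqt := hq t hz0.le hzρ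
  have ht1 : t < 1 := by
    nlinarith [hqt, mul_nonneg (mul_nonneg hα0.le (by linarith : (0:ℝ) ≤ (n:ℝ)-1)) (sq_nonneg t),
      hz0, (by linarith : (0:ℝ) < (n:ℝ)+1)]
  have hzball : z ∈ ball (0 : ℂ) 1 := mem_ball_zero_iff.2 ht1
  have hpz := hωeq z hzball
  simp only [if_neg hznz] at hpz
  set w : ℂ := ω z with hw_def
  -- Schwarz lemma
  have hwt : ‖w‖ ≤ t :=
    Complex.norm_le_norm_of_mapsTo_ball (hωa.differentiableOn)
      (fun x hx => ball_subset_closedBall (hωmap x hx)) hω0 ht1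
  set tw : ℝ := ‖w‖ with htw_def
  have htw0 : 0 ≤ tw := norm_nonneg _
  have hqw : α * ((n : ℝ) - 1) * tw ^ 2 + ((n : ℝ) + 1) * tw - ((n : ℝ) - 1) < 0 :=
    hq tw htw0 (lt_of_le_of_lt hwt hzρ)
  have hd0 : 0 < 1 - α * tw ^ 2 := by
    nlinarith [hqw, mul_nonneg (by linarith : (0:ℝ) ≤ (n:ℝ)+1) htw0,
      (by linarith : (0:ℝ) < (n:ℝ)-1)]
  have h2 : ‖(α : ℂ) * w ^ 2‖ = α * tw ^ 2 := by
    rw [norm_mul, norm_pow, Complex.norm_real, Real.norm_eq_abs, abs_of_pos hα0]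
  have h3 : 1 - α * tw ^ 2 ≤ ‖1 - (α : ℂ) * w ^ 2‖ := by
    have h := norm_sub_norm_le (1 : ℂ) ((α : ℂ) * w ^ 2)
    rw [norm_one, h2] at h
    linarith
  have hdne : (1 : ℂ) - (α : ℂ) * w ^ 2 ≠ 0 := by
    intro h
    rw [h] at h3
    simp at h3
    linarith
  rw [hpz]
  apply disk_subset_OmeganL hn
  have hsimp : (1 + w / (1 - (α : ℂ) * w ^ 2)) - 1 = w / (1 - (α : ℂ) * w ^ 2) := by ring
  rw [hsimp, norm_div, ← htw_def]
  calc tw / ‖1 - (α : ℂ) * w ^ 2‖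
      ≤ tw / (1 - α * tw ^ 2) := by
        apply div_le_div_of_nonneg_left htw0 hd0 h3
    _ < ((n : ℝ) - 1) / ((n : ℝ) + 1) := by
        rw [div_lt_div_iff₀ hd0 (by linarith : (0:ℝ) < (n : ℝ) + 1)]
        nlinarith [hqw]
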